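/- Let K be any field and p₁, p₂ ∈ K[x] tame polynomials (char K divides neither degree). Let k₁ = |Γ_K(p₁)|, k₂ = |Γ_K(p₂)|, k = |Γ_K(p₁∘p₂)|. Then k divides k₁·k₂. -/

import Mathlib

open Polynomial

/-- Composition of rational functions: `ratComp g h = g ∘ h = g(h)`. -/
noncomputable def ratComp {K : Type*} [Field K] (g h : RatFunc K) : RatFunc K :=
  RatFunc.eval (algebraMap K (RatFunc K)) h g

/-- Degree of a rational function `f = f_N / f_D` in lowest terms:
`max (deg f_N) (deg f_D)`. -/
noncomputable def ratDeg {K : Type*} [Field K] (f : RatFunc K) : ℕ :=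
  max f.num.natDegree f.denom.natDegree

/-- The fixing group of `f`: Möbius transformations (degree-1 rational
functions) `u` with `f ∘ u = f`. -/
noncomputable def fixGroup {K : Type*} [Field K] (f : RatFunc K) : Set (RatFunc K) :=
  {u | ratDeg u = 1 ∧ ratComp f u = f}

open Finset

section Aux

variable {K : Type*} [Field K]

/-- Coefficient of the geometric cofactor at top degree. -/
lemma geomE_coeff (q r : K[X]) {m : ℕ} (hm : 1 ≤ m) (hq : q.natDegree = m)
    (hr : r.natDegree = m) (hlc : q.leadingCoeff = r.leadingCoeff) (n : ℕ) :
    (∑ j ∈ Finset.range n, q ^ j * r ^ (n - 1 - j)).coeff ((n - 1) * m)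
      = n * q.leadingCoeff ^ (n - 1) := by
  have hq0 : q ≠ 0 := fun h => by simp [h] at hq; omega
  have hr0 : r ≠ 0 := fun h => by simp [h] at hr; omega
  rw [finset_sum_coeff]
  have hterm : ∀ j ∈ Finset.range n,
      (q ^ j * r ^ (n - 1 - j)).coeff ((n - 1) * m) = q.leadingCoeff ^ (n - 1) := by
    intro j hj
    rw [Finset.mem_range] at hj
    have hdeg : (q ^ j * r ^ (n - 1 - j)).natDegree = (n - 1) * m := by
      rw [natDegree_mul (pow_ne_zero _ hq0) (pow_ne_zero _ hr0),
        natDegree_pow, natDegree_pow, hq, hr]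
      have : j + (n - 1 - j) = n - 1 := by omega
      rw [← add_mul, this]
    rw [← hdeg, coeff_natDegree, leadingCoeff_mul, leadingCoeff_pow, leadingCoeff_pow, ← hlc,
      ← pow_add]
    congr 1
    omega
  rw [Finset.sum_congr rfl hterm, Finset.sum_const, Finset.card_range, nsmul_eq_mul]

/-- `q^n - r^n` is nonzero of degree at least `(n-1)m`. -/
lemma pow_sub_pow_lemma (q r : K[X]) {m n : ℕ} (hm : 1 ≤ m) (hn : (n : K) ≠ 0)
    (hq : q.natDegree = m) (hr : r.natDegree = m)
    (hlc : q.leadingCoeff = r.leadingCoeff) (hne : q ≠ r) :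
    q ^ n - r ^ n ≠ 0 ∧ (n - 1) * m ≤ (q ^ n - r ^ n).natDegree := by
  have hq0 : q ≠ 0 := fun h => by simp [h] at hq; omega
  have hlc0 : q.leadingCoeff ≠ 0 := leadingCoeff_ne_zero.mpr hq0
  set G : K[X] := ∑ j ∈ Finset.range n, q ^ j * r ^ (n - 1 - j) with hG
  have hid : G * (q - r) = q ^ n - r ^ n := geom_sum₂_mul q r n
  have hGc : G.coeff ((n - 1) * m) = n * q.leadingCoeff ^ (n - 1) :=
    geomE_coeff q r hm hq hr hlc n
  have hGc0 : G.coeff ((n - 1) * m) ≠ 0 := by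
    rw [hGc]; exact mul_ne_zero hn (pow_ne_zero _ hlc0)
  have hG0 : G ≠ 0 := fun h => hGc0 (by rw [h, coeff_zero])
  have hsub0 : q - r ≠ 0 := sub_ne_zero.mpr hne
  constructor
  · rw [← hid]; exact mul_ne_zero hG0 hsub0
  · rw [← hid, natDegree_mul hG0 hsub0]
    exact le_add_right (le_natDegree_of_ne_zero hGc0)

/-- Cancellation: tame `p`, equal degrees, equal leading coefficients. -/
lemma comp_cancel (p q r : K[X]) (hchar : ((p.natDegree : K)) ≠ 0)
    {m : ℕ} (hm : 1 ≤ m) (hq : q.natDegree = m) (hr : r.natDegree = m)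
    (hlc : q.leadingCoeff = r.leadingCoeff) (h : p.comp q = p.comp r) : q = r := by
  by_contra hne
  have hq0 : q ≠ 0 := fun h => by simp [h] at hq; omega
  have hr0 : r ≠ 0 := fun h => by simp [h] at hr; omega
  have hp0 : p ≠ 0 := fun h => by simp [h] at hchar
  have hlcq0 : q.leadingCoeff ≠ 0 := leadingCoeff_ne_zero.mpr hq0
  set n := p.natDegree with hn
  -- the cofactor
  set E : K[X] := ∑ i ∈ Finset.range (n + 1),
      C (p.coeff i) * ∑ j ∈ Finset.range i, q ^ j * r ^ (i - 1 - j) with hE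
  have hid : p.comp q - p.comp r = E * (q - r) := by
    show eval₂ C q p - eval₂ C r p = _
    rw [eval₂_eq_sum_range, eval₂_eq_sum_range,
      ← Finset.sum_sub_distrib, hE, Finset.sum_mul]
    refine Finset.sum_congr rfl fun i _ => ?_
    rw [← mul_sub, mul_assoc, geom_sum₂_mul]
  rw [h, sub_self] at hid
  have hsub0 : q - r ≠ 0 := sub_ne_zero.mpr hne
  have hE0 : E ≠ 0 := by
    intro hE0
    -- compute the coefficient of E at (n-1)*m
    have hcoeff : E.coeff ((n - 1) * m) = p.leadingCoeff * ((n : K) * q.leadingCoeff ^ (n - 1)) := by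
      rw [hE, finset_sum_coeff]
      have hsplit : ∀ i ∈ Finset.range (n + 1), i ≠ n →
          (C (p.coeff i) * ∑ j ∈ Finset.range i, q ^ j * r ^ (i - 1 - j)).coeff ((n - 1) * m)
            = 0 := by
        intro i hi hin
        rw [Finset.mem_range] at hi
        have hilt : i < n := by omega
        rcases Nat.eq_zero_or_pos i with h0 | h1
        · simp [h0]
        apply coeff_eq_zero_of_natDegree_lt
        calc (C (p.coeff i) * ∑ j ∈ Finset.range i, q ^ j * r ^ (i - 1 - j)).natDegree
            ≤ 0 + (∑ j ∈ Finset.range i, q ^ j * r ^ (i - 1 - j)).natDegree := by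
              refine le_trans (natDegree_mul_le) (add_le_add (natDegree_C _).le le_rfl)
          _ ≤ (i - 1) * m := by
              rw [zero_add]
              apply natDegree_sum_le_of_forall_le
              intro j hj
              rw [Finset.mem_range] at hj
              refine le_trans natDegree_mul_le ?_
              rw [natDegree_pow, natDegree_pow, hq, hr, ← add_mul]
              exact Nat.mul_le_mul_right _ (by omega)
          _ < (n - 1) * m := by
              have h2 : i - 1 < n - 1 := by omega
              exact (Nat.mul_lt_mul_right (by omega : 0 < m)).mpr h2
      rw [Finset.sum_eq_single_of_mem n (Finset.self_mem_range_succ n) hsplit]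
      rw [coeff_C_mul, geomE_coeff q r hm hq hr hlc n, coeff_natDegree]
    have : p.leadingCoeff * ((n : K) * q.leadingCoeff ^ (n - 1)) ≠ 0 :=
      mul_ne_zero (leadingCoeff_ne_zero.mpr hp0)
        (mul_ne_zero hchar (pow_ne_zero _ hlcq0))
    rw [hE0, coeff_zero] at hcoeff
    exact this hcoeff.symm
  exact (mul_ne_zero hE0 hsub0) hid.symm

/-- Approximate `n`-th root: completing the power kills the two top coefficients. -/
lemma approx_lemma (p S : K[X]) {n m : ℕ} (hn : p.natDegree = n) (hn2 : 2 ≤ n)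
    (hchar : ((n : K)) ≠ 0) (hm : 1 ≤ m) (hS : S.natDegree = m) :
    (p.comp S - C p.leadingCoeff *
        (S + C (p.coeff (n - 1) / ((n : K) * p.leadingCoeff))) ^ n).natDegree
      ≤ (n - 2) * m := by
  have hp0 : p ≠ 0 := fun h => by simp [h] at hn; omega
  have hlc0 : p.leadingCoeff ≠ 0 := leadingCoeff_ne_zero.mpr hp0
  set e : K := p.coeff (n - 1) / ((n : K) * p.leadingCoeff) with he
  set c : K := p.leadingCoeff with hc
  -- expand both sides as sums of powers of S
  have h1 : p.comp S = ∑ i ∈ Finset.range (n + 1), C (p.coeff i) * S ^ i := by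
    show eval₂ C S p = _
    rw [eval₂_eq_sum_range, hn]
  have h2 : C c * (S + C e) ^ n
      = ∑ i ∈ Finset.range (n + 1), C (c * e ^ (n - i) * (n.choose i : K)) * S ^ i := by
    rw [add_pow, Finset.mul_sum]
    refine Finset.sum_congr rfl fun i _ => ?_
    simp only [C_mul, C_pow, map_natCast]
    ring
  rw [h1, h2, ← Finset.sum_sub_distrib]
  have h3 : ∀ i ∈ Finset.range (n + 1),
      C (p.coeff i) * S ^ i - C (c * e ^ (n - i) * (n.choose i : K)) * S ^ i
        = C (p.coeff i - c * e ^ (n - i) * (n.choose i : K)) * S ^ i := by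
    intro i _; rw [C_sub, sub_mul]
  rw [Finset.sum_congr rfl h3]
  -- the two top terms vanish
  have hd : ∀ i ∈ Finset.range (n + 1), i ∉ Finset.range (n - 1) →
      C (p.coeff i - c * e ^ (n - i) * (n.choose i : K)) * S ^ i = 0 := by
    intro i hi hi'
    rw [Finset.mem_range] at hi hi'
    have : i = n - 1 ∨ i = n := by omega
    rcases this with h | h
    · subst h
      have h4 : n - (n - 1) = 1 := by omega
      have h5 : (n.choose (n - 1) : K) = (n : K) := by
        rw [Nat.choose_symm (by omega : 1 ≤ n), Nat.choose_one_right]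
      rw [h4, h5, pow_one, he]
      have : c * (p.coeff (n - 1) / ((n : K) * c)) * (n : K) = p.coeff (n - 1) := by
        field_simp
      rw [this, ← hn]
      simp
    · subst h
      rw [Nat.sub_self, pow_zero, Nat.choose_self, mul_one, Nat.cast_one, mul_one, ← hn,
        coeff_natDegree, ← hc, sub_self, C_0, zero_mul]
  rw [← Finset.sum_subset (Finset.range_subset_range.mpr (by omega : n - 1 ≤ n + 1)) hd]
  apply natDegree_sum_le_of_forall_le
  intro i hi
  rw [Finset.mem_range] at hi
  refine le_trans natDegree_mul_le ?_
  rw [natDegree_C, zero_add, natDegree_pow, hS]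
  exact Nat.mul_le_mul_right _ (by omega)

/-- Uniqueness of right components: if `p ∘ Q = p ∘ R` with `p` tame and
`deg Q = deg R = m ≥ 1`, then `Q = α R + β` for the evident `α`. -/
lemma rct (p Q R : K[X]) (hp1 : 1 ≤ p.natDegree) (hchar : ((p.natDegree : K)) ≠ 0)
    {m : ℕ} (hm : 1 ≤ m) (hQ : Q.natDegree = m) (hR : R.natDegree = m)
    (h : p.comp Q = p.comp R) :
    ∃ β : K, Q = C (Q.leadingCoeff / R.leadingCoeff) * R + C β := by
  have hQ0 : Q ≠ 0 := fun hh => by simp [hh] at hQ; omega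
  have hR0 : R ≠ 0 := fun hh => by simp [hh] at hR; omega
  have ha0 : Q.leadingCoeff ≠ 0 := leadingCoeff_ne_zero.mpr hQ0
  have hb0 : R.leadingCoeff ≠ 0 := leadingCoeff_ne_zero.mpr hR0
  have hp0 : p ≠ 0 := fun hh => by simp [hh] at hchar
  have hlcp : p.leadingCoeff ≠ 0 := leadingCoeff_ne_zero.mpr hp0
  set n := p.natDegree with hn
  set a := Q.leadingCoeff with hadef
  set b := R.leadingCoeff with hbdef
  set α := a / b with hα
  have hα0 : α ≠ 0 := div_ne_zero ha0 hb0
  -- leading coefficients: lc p * a^n = lc p * b^n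
  have hlceq : a ^ n = b ^ n := by
    have h1 : (p.comp Q).leadingCoeff = p.leadingCoeff * a ^ n :=
      leadingCoeff_comp (by omega)
    have h2 : (p.comp R).leadingCoeff = p.leadingCoeff * b ^ n :=
      leadingCoeff_comp (by omega)
    rw [h] at h1
    exact mul_left_cancel₀ hlcp (h1.symm.trans h2)
  have hαpow : α ^ n = 1 := by
    rw [hα, div_pow, hlceq, div_self (pow_ne_zero _ hb0)]
  rcases eq_or_lt_of_le hp1 with h1 | h2
  · -- n = 1 : direct cancellation
    have hn1 : n = 1 := h1.symm
    have hprep : p = C (p.coeff 1) * X + C (p.coeff 0) :=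
      eq_X_add_C_of_natDegree_le_one (by omega)
    have hc1 : p.coeff 1 ≠ 0 := by
      have : p.coeff 1 = p.leadingCoeff := by rw [← coeff_natDegree, ← hn, hn1]
      rw [this]; exact hlcp
    have hQR : Q = R := by
      have := h
      rw [hprep] at this
      simp only [add_comp, mul_comp, C_comp, X_comp] at this
      have h5 : C (p.coeff 1) * Q = C (p.coeff 1) * R := by
        have := add_right_cancel this
        exact this
      have := mul_left_cancel₀ (by simpa using hc1 : C (p.coeff 1) ≠ 0) h5
      exact this
    refine ⟨0, ?_⟩
    rw [hQR, C_0, add_zero]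
    have hα1 : Q.leadingCoeff / R.leadingCoeff = 1 := by
      rw [hQR, div_self hb0]
    simp only [hα, hadef, hbdef, hα1, C_1, one_mul]
  · -- n ≥ 2
    have hn2 : 2 ≤ n := h2
    set e : K := p.coeff (n - 1) / ((n : K) * p.leadingCoeff) with he
    have hQap := approx_lemma p Q rfl hn2 hchar hm hQ
    have hRap := approx_lemma p R rfl hn2 hchar hm hR
    rw [← hn, ← he] at hQap hRap
    set DQ := p.comp Q - C p.leadingCoeff * (Q + C e) ^ n with hDQ
    set DR := p.comp R - C p.leadingCoeff * (R + C e) ^ n with hDR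
    have key : C p.leadingCoeff * ((Q + C e) ^ n - (C α * (R + C e)) ^ n) = DR - DQ := by
      rw [mul_pow, ← C_pow, hαpow, C_1, one_mul, hDR, hDQ, h]
      ring
    -- degrees of the two "tilde" polynomials
    have hQt : (Q + C e).natDegree = m := by rw [natDegree_add_C, hQ]
    have hRt : (C α * (R + C e)).natDegree = m := by
      rw [natDegree_C_mul hα0, natDegree_add_C, hR]
    have hQtl : (Q + C e).leadingCoeff = a := by
      rw [leadingCoeff, hQt, coeff_add, coeff_C, if_neg (by omega : ¬ m = 0), add_zero,
        ← hQ, coeff_natDegree]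
    have hRtl : (C α * (R + C e)).leadingCoeff = a := by
      rw [leadingCoeff_mul, leadingCoeff_C, leadingCoeff, natDegree_add_C, hR, coeff_add,
        coeff_C, if_neg (by omega : ¬ m = 0), add_zero, ← hR, coeff_natDegree, ← hbdef, hα,
        div_mul_cancel₀ _ hb0]
    by_cases heq : Q + C e = C α * (R + C e)
    · -- extract the conclusion
      refine ⟨α * e - e, ?_⟩
      have : Q = C α * (R + C e) - C e := by rw [← heq]; ring
      rw [this]
      rw [mul_add, ← C_mul, C_sub]
      ring
    · exfalso
      obtain ⟨hne0, hdge⟩ := pow_sub_pow_lemma (Q + C e) (C α * (R + C e)) hm hchar hQt hRt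
        (hQtl.trans hRtl.symm) heq
      have hcard : ((Q + C e) ^ n - (C α * (R + C e)) ^ n).natDegree
          = (C p.leadingCoeff * ((Q + C e) ^ n - (C α * (R + C e)) ^ n)).natDegree := by
        rw [natDegree_C_mul hlcp]
      have hle : (n - 1) * m ≤ (DR - DQ).natDegree := by
        rw [← key, ← hcard]; exact hdge
      have hlt : (DR - DQ).natDegree ≤ (n - 2) * m :=
        le_trans (natDegree_sub_le _ _) (max_le hRap hQap)
      have : (n - 1) * m = (n - 2) * m + m := by
        have : n - 1 = (n - 2) + 1 := by omega
        rw [this, add_mul, one_mul]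
      omega

lemma comp_right_cancel {g h p : K[X]} (hp : p.natDegree ≠ 0)
    (H : g.comp p = h.comp p) : g = h := by
  by_contra hne
  have h0 : g - h ≠ 0 := sub_ne_zero.mpr hne
  have hc : (g - h).comp p = 0 := by rw [sub_comp, H, sub_self]
  have := leadingCoeff_comp (q := p) (p := g - h) hp
  rw [hc, leadingCoeff_zero] at this
  exact (mul_ne_zero (leadingCoeff_ne_zero.mpr h0)
    (pow_ne_zero _ (leadingCoeff_ne_zero.mpr (fun hp0 => hp (by simp [hp0]))))) this.symm

/-- The subgroup of `Kˣ` of leading coefficients of affine maps fixing `p`. -/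
noncomputable def fixSub (p : K[X]) : Subgroup Kˣ where
  carrier := {a : Kˣ | ∃ b : K, p.comp (C (a : K) * X + C b) = p}
  one_mem' := ⟨0, by simp⟩
  mul_mem' := by
    rintro a a' ⟨b, hb⟩ ⟨b', hb'⟩
    refine ⟨(a : K) * b' + b, ?_⟩
    have hcomp : (C (a : K) * X + C b).comp (C (a' : K) * X + C b')
        = C ((↑(a * a') : K)) * X + C ((a : K) * b' + b) := by
      simp only [add_comp, mul_comp, C_comp, X_comp, Units.val_mul]
      rw [C_mul, C_add, C_mul]
      ring
    rw [← hcomp, ← comp_assoc, hb, hb']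
  inv_mem' := by
    rintro a ⟨b, hb⟩
    refine ⟨-((a : K)⁻¹ * b), ?_⟩
    have hval : ((a⁻¹ : Kˣ) : K) = (a : K)⁻¹ := by
      rw [← Units.val_inv_eq_inv_val]
    rw [hval]
    have hcomp : (C (a : K) * X + C b).comp (C (a : K)⁻¹ * X + C (-((a : K)⁻¹ * b))) = X := by
      simp only [add_comp, mul_comp, C_comp, X_comp]
      rw [mul_add, ← mul_assoc, ← C_mul, mul_inv_cancel₀ (Units.ne_zero a), C_1, one_mul,
        ← C_mul]
      have hab : (a : K) * -((a : K)⁻¹ * b) = -b := by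
        rw [mul_neg, ← mul_assoc, mul_inv_cancel₀ (Units.ne_zero a), one_mul]
      rw [hab, map_neg]
      ring
    conv_lhs => rw [← hb]
    rw [comp_assoc, hcomp, comp_X]

lemma mem_fixSub_pow_eq_one {p : K[X]} (hp : p.natDegree ≠ 0) {a : Kˣ}
    (ha : a ∈ fixSub p) : (a : K) ^ p.natDegree = 1 := by
  obtain ⟨b, hb⟩ := ha
  have hq1 : (C (a : K) * X + C b).natDegree = 1 := natDegree_linear (Units.ne_zero a)
  have hlc := leadingCoeff_comp (p := p) (q := C (a : K) * X + C b) (by rw [hq1]; omega)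
  rw [hb, leadingCoeff_linear (Units.ne_zero a)] at hlc
  have hp0 : p ≠ 0 := fun h => hp (by simp [h])
  have := mul_left_cancel₀ (leadingCoeff_ne_zero.mpr hp0)
    (by rw [← hlc]; rw [mul_one] : p.leadingCoeff * 1 = p.leadingCoeff * (a : K) ^ p.natDegree)
  exact this.symm

lemma fixSub_finite (p : K[X]) (hp : p.natDegree ≠ 0) : Finite (fixSub p) := by
  have hfin : Set.Finite {x : K | x ^ p.natDegree = 1} := by
    have h0 : (X ^ p.natDegree - C (1 : K)) ≠ 0 :=
      X_pow_sub_C_ne_zero (by omega) 1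
    have := Polynomial.finite_setOf_isRoot h0
    refine this.subset fun x hx => ?_
    simp only [Set.mem_setOf_eq, IsRoot, eval_sub, eval_pow, eval_X, eval_C] at *
    rw [hx, sub_self]
  have hfin2 : Set.Finite {a : Kˣ | a ∈ fixSub p} := by
    have : Set.Finite ((fun a : Kˣ => (a : K)) ⁻¹' {x : K | x ^ p.natDegree = 1}) :=
      Set.Finite.preimage (Function.Injective.injOn Units.val_injective) hfin
    refine this.subset fun a ha => ?_
    exact mem_fixSub_pow_eq_one hp ha
  exact hfin2.to_subtype

/-- Main structural analysis: an affine symmetry of `p₁ ∘ p₂` induces an affine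
symmetry of `p₁` with slope `a ^ deg p₂`. -/
lemma analysis (p₁ p₂ : K[X]) (h₁ : 0 < p₁.natDegree) (h₂ : 0 < p₂.natDegree)
    (c₁ : ((p₁.natDegree : K)) ≠ 0) (a : Kˣ) (b : K)
    (hab : (p₁.comp p₂).comp (C (a : K) * X + C b) = p₁.comp p₂) :
    ∃ β : K, p₁.comp (C ((a : K) ^ p₂.natDegree) * X + C β) = p₁
      ∧ p₂.comp (C (a : K) * X + C b) = C ((a : K) ^ p₂.natDegree) * p₂ + C β := by
  have hp₂0 : p₂ ≠ 0 := fun h => by simp [h] at h₂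
  have hlc₂ : p₂.leadingCoeff ≠ 0 := leadingCoeff_ne_zero.mpr hp₂0
  set q : K[X] := C (a : K) * X + C b with hq
  have hq1 : q.natDegree = 1 := natDegree_linear (Units.ne_zero a)
  set Q : K[X] := p₂.comp q with hQdef
  have hQdeg : Q.natDegree = p₂.natDegree := by
    rw [hQdef, natDegree_comp, hq1, mul_one]
  have hcomp : p₁.comp Q = p₁.comp p₂ := by
    rw [hQdef, ← comp_assoc, hab]
  have hQlc : Q.leadingCoeff = p₂.leadingCoeff * (a : K) ^ p₂.natDegree := by
    rw [hQdef, leadingCoeff_comp (by omega), leadingCoeff_linear (Units.ne_zero a)]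
  obtain ⟨β, hβ⟩ := rct p₁ Q p₂ h₁ c₁ h₂ hQdeg rfl hcomp
  have hαval : Q.leadingCoeff / p₂.leadingCoeff = (a : K) ^ p₂.natDegree := by
    rw [hQlc, mul_comm, mul_div_assoc, div_self hlc₂, mul_one]
  rw [hαval] at hβ
  refine ⟨β, ?_, hβ⟩
  have hℓ : (C ((a : K) ^ p₂.natDegree) * X + C β).comp p₂
      = C ((a : K) ^ p₂.natDegree) * p₂ + C β := by
    simp only [add_comp, mul_comp, C_comp, X_comp]
  apply comp_right_cancel (p := p₂) (by omega)
  rw [comp_assoc, hℓ, ← hβ, hcomp]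

/-- The main divisibility, at the level of the subgroups of `Kˣ`. -/
lemma fixSub_card_dvd (p₁ p₂ : K[X]) (h₁ : 0 < p₁.natDegree) (h₂ : 0 < p₂.natDegree)
    (c₁ : ((p₁.natDegree : K)) ≠ 0) :
    Nat.card (fixSub (p₁.comp p₂)) ∣ Nat.card (fixSub p₁) * Nat.card (fixSub p₂) := by
  set G := fixSub (p₁.comp p₂) with hG
  set ψ : G →* Kˣ := (powMonoidHom p₂.natDegree).comp G.subtype with hψ
  have hrange : ψ.range ≤ fixSub p₁ := by
    rintro x ⟨⟨a, ha⟩, rfl⟩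
    obtain ⟨b, hb⟩ := ha
    obtain ⟨β, hβ₁, _⟩ := analysis p₁ p₂ h₁ h₂ c₁ a b hb
    have hval : ((ψ ⟨a, ⟨b, hb⟩⟩ : Kˣ) : K) = (a : K) ^ p₂.natDegree := by
      simp [hψ, powMonoidHom]
    exact ⟨β, by rw [hval]; exact hβ₁⟩
  have hker : ψ.ker.map G.subtype ≤ fixSub p₂ := by
    rintro x ⟨⟨a, ha⟩, hk, rfl⟩
    obtain ⟨b, hb⟩ := ha
    obtain ⟨β, hβ₁, hβ₂⟩ := analysis p₁ p₂ h₁ h₂ c₁ a b hb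
    have hav : (a : K) ^ p₂.natDegree = 1 := by
      have h5 : a ^ p₂.natDegree = 1 := by
        simpa [hψ, powMonoidHom, MonoidHom.mem_ker] using hk
      rw [← Units.val_pow_eq_pow_val, h5, Units.val_one]
    rw [hav, C_1, one_mul] at hβ₁ hβ₂
    have hβ0 : β = 0 := by
      have hcan : X + C β = X := by
        apply comp_cancel p₁ (X + C β) X c₁ (le_refl 1) (natDegree_X_add_C _)
          natDegree_X (by rw [leadingCoeff_X_add_C, leadingCoeff_X]) ?_
        rw [comp_X]
        exact hβ₁
      have := congrArg (fun f => Polynomial.coeff f 0) hcan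
      simpa using this
    refine ⟨b, ?_⟩
    show p₂.comp (C (a : K) * X + C b) = p₂
    rw [hβ₂, hβ0, C_0, add_zero]
  -- counting
  haveI : Finite G := fixSub_finite _ (by rw [natDegree_comp]; positivity)
  haveI : Finite (fixSub p₁) := fixSub_finite _ (by omega)
  haveI : Finite (fixSub p₂) := fixSub_finite _ (by omega)
  have hcard : Nat.card G = Nat.card ψ.range * Nat.card ψ.ker := by
    rw [Subgroup.card_eq_card_quotient_mul_card_subgroup ψ.ker]
    congr 1
    exact Nat.card_congr (QuotientGroup.quotientKerEquivRange ψ).toEquiv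
  have hkercard : Nat.card ψ.ker = Nat.card (ψ.ker.map G.subtype) :=
    Nat.card_congr (Subgroup.equivMapOfInjective _ _ G.subtype_injective).toEquiv
  rw [hcard, hkercard]
  exact mul_dvd_mul (Subgroup.card_dvd_of_le hrange) (Subgroup.card_dvd_of_le hker)

lemma ratComp_algebraMap (p : K[X]) (u : RatFunc K) :
    ratComp (algebraMap K[X] (RatFunc K) p) u = aeval u p := by
  unfold ratComp
  rw [RatFunc.eval, RatFunc.num_algebraMap, RatFunc.denom_algebraMap, eval₂_one,
    div_one, aeval_def]

lemma ratDeg_algebraMap (q : K[X]) :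
    ratDeg (algebraMap K[X] (RatFunc K) q) = q.natDegree := by
  unfold ratDeg
  rw [RatFunc.num_algebraMap, RatFunc.denom_algebraMap, natDegree_one]
  exact max_eq_left (Nat.zero_le _)

lemma algebraMap_RatFunc_comp :
    (algebraMap K[X] (RatFunc K)).comp (C : K →+* K[X]) = algebraMap K (RatFunc K) := by
  rw [← Polynomial.algebraMap_eq, ← IsScalarTower.algebraMap_eq]

lemma fixGroup_eq_image (p : K[X]) (hp : 0 < p.natDegree) :
    fixGroup (algebraMap K[X] (RatFunc K) p)
      = (algebraMap K[X] (RatFunc K)) '' {q : K[X] | q.natDegree = 1 ∧ p.comp q = p} := by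
  have hp0 : p ≠ 0 := fun h => by simp [h] at hp
  have hlc : p.leadingCoeff ≠ 0 := leadingCoeff_ne_zero.mpr hp0
  ext u
  constructor
  · rintro ⟨hdeg, hcomp⟩
    rw [ratComp_algebraMap] at hcomp
    set P : (K[X])[X] := p.map (C : K →+* K[X]) - C p with hP
    have hmapdeg : (p.map (C : K →+* K[X])).natDegree = p.natDegree :=
      natDegree_map_eq_of_injective C_injective p
    have hPdeg : P.natDegree = p.natDegree := by
      rw [hP, natDegree_sub_C, hmapdeg]
    have hPlc : P.leadingCoeff = C p.leadingCoeff := by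
      rw [leadingCoeff, hPdeg, hP, coeff_sub, coeff_map, coeff_C,
        if_neg (by omega : ¬ p.natDegree = 0), sub_zero, ← leadingCoeff]
    have hint : IsIntegral K[X] u := by
      refine ⟨C (C p.leadingCoeff⁻¹) * P, ?_, ?_⟩
      · show (C (C p.leadingCoeff⁻¹) * P).leadingCoeff = 1
        rw [leadingCoeff_mul, leadingCoeff_C, hPlc, ← C_mul,
          inv_mul_cancel₀ hlc, C_1]
      · rw [eval₂_mul, eval₂_C, hP, eval₂_sub, eval₂_C, eval₂_map,
          algebraMap_RatFunc_comp, ← aeval_def, hcomp, sub_self, mul_zero]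
    obtain ⟨q, hq⟩ := IsIntegrallyClosed.isIntegral_iff.mp hint
    refine ⟨q, ⟨?_, ?_⟩, hq⟩
    · rw [← hq, ratDeg_algebraMap] at hdeg
      exact hdeg
    · rw [← hq, aeval_algebraMap_apply, ← comp_eq_aeval] at hcomp
      exact RatFunc.algebraMap_injective K hcomp
  · rintro ⟨q, ⟨hq1, hq2⟩, rfl⟩
    refine ⟨?_, ?_⟩
    · rw [ratDeg_algebraMap, hq1]
    · rw [ratComp_algebraMap, aeval_algebraMap_apply, ← comp_eq_aeval, hq2]

lemma ncard_fixGroup (p : K[X]) (hp : 0 < p.natDegree) (hchar : ((p.natDegree : K)) ≠ 0) :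
    (fixGroup (algebraMap K[X] (RatFunc K) p)).ncard = Nat.card (fixSub p) := by
  rw [fixGroup_eq_image p hp,
    Set.ncard_image_of_injective _ (RatFunc.algebraMap_injective K),
    ← Nat.card_coe_set_eq]
  apply Nat.card_congr
  have hne : ∀ q : K[X], q.natDegree = 1 → q.leadingCoeff ≠ 0 := by
    intro q hq1
    exact leadingCoeff_ne_zero.mpr (fun h => by simp [h] at hq1)
  refine Equiv.ofBijective
    (fun x => ⟨Units.mk0 x.1.leadingCoeff (hne x.1 x.2.1),
      ⟨x.1.coeff 0, ?_⟩⟩) ⟨?_, ?_⟩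
  · -- membership: rewrite q in linear form
    obtain ⟨q, hq1, hq2⟩ := x
    have hrep : q = C q.leadingCoeff * X + C (q.coeff 0) := by
      conv_lhs => rw [eq_X_add_C_of_natDegree_le_one hq1.le]
      rw [leadingCoeff, hq1]
    show p.comp (C q.leadingCoeff * X + C (q.coeff 0)) = p
    rw [← hrep]
    exact hq2
  · -- injective
    rintro ⟨q, hq1, hq2⟩ ⟨q', hq1', hq2'⟩ hqq
    have hlceq : q.leadingCoeff = q'.leadingCoeff := by
      have := congrArg (fun u => ((u : ↥(fixSub p)) : Kˣ).val) hqq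
      simpa using this
    have : q = q' :=
      comp_cancel p q q' hchar (le_refl 1) hq1 hq1' hlceq (by rw [hq2, hq2'])
    exact Subtype.ext this
  · -- surjective
    rintro ⟨a, ha⟩
    obtain ⟨b, hb⟩ := ha
    refine ⟨⟨C (a : K) * X + C b, natDegree_linear (Units.ne_zero a), hb⟩, ?_⟩
    apply Subtype.ext
    apply Units.ext
    show (C (a : K) * X + C b).leadingCoeff = (a : K)
    exact leadingCoeff_linear (Units.ne_zero a)

end Aux

/-- For tame polynomials `p₁, p₂`, the order of `Γ_K(p₁ ∘ p₂)` divides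
`|Γ_K(p₁)| · |Γ_K(p₂)|`. -/
theorem fixGroup_card_comp_dvd {K : Type*} [Field K] (p₁ p₂ : K[X])
    (h₁ : 0 < p₁.natDegree) (h₂ : 0 < p₂.natDegree)
    (t₁ : ¬ (ringChar K : ℕ) ∣ p₁.natDegree) (t₂ : ¬ (ringChar K : ℕ) ∣ p₂.natDegree) :
    (fixGroup (algebraMap K[X] (RatFunc K) (p₁.comp p₂))).ncard ∣
      (fixGroup (algebraMap K[X] (RatFunc K) p₁)).ncard *
        (fixGroup (algebraMap K[X] (RatFunc K) p₂)).ncard := by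
  have c₁ : ((p₁.natDegree : K)) ≠ 0 := fun h => t₁ ((ringChar.spec K _).mp h)
  have c₂ : ((p₂.natDegree : K)) ≠ 0 := fun h => t₂ ((ringChar.spec K _).mp h)
  have hcpos : 0 < (p₁.comp p₂).natDegree := by
    rw [natDegree_comp]; exact Nat.mul_pos h₁ h₂
  have ccomp : (((p₁.comp p₂).natDegree : K)) ≠ 0 := by
    rw [natDegree_comp, Nat.cast_mul]; exact mul_ne_zero c₁ c₂
  rw [ncard_fixGroup _ hcpos ccomp, ncard_fixGroup p₁ h₁ c₁, ncard_fixGroup p₂ h₂ c₂]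
  exact fixSub_card_dvd p₁ p₂ h₁ h₂ c₁
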